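/- Let H be a shortest path graph and let K be a maximal clique in H. Then every vertex of H not in K is adjacent to at most one vertex of K. -/

import Mathlib

open SimpleGraph

variable {V : Type*}

/-- An `(a,b)`-geodesic in `G`: a shortest path from `a` to `b`. -/
def Geodesic (G : SimpleGraph V) (a b : V) : Type _ :=
  {p : G.Walk a b // p.IsPath ∧ p.length = G.dist a b}

/-- The set of index levels at which two geodesics differ
(position `i` in the support list is index level `i`; position `0` is `a`). -/
def diffIndices (G : SimpleGraph V) (a b : V) (U W : Geodesic G a b) : Set ℕ :=
  {i | U.1.support[i]? ≠ W.1.support[i]?}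

/-- The shortest path graph `S(G,a,b)`: vertices are the `(a,b)`-geodesics,
two geodesics being adjacent iff they differ at exactly one index level. -/
def SPG (G : SimpleGraph V) (a b : V) : SimpleGraph (Geodesic G a b) where
  Adj U W := ∃! i, i ∈ diffIndices G a b U W
  symm := by
    constructor
    rintro U W ⟨i, hi, hu⟩
    exact ⟨i, Ne.symm hi, fun j hj => hu j (Ne.symm hj)⟩
  loopless := by
    constructor
    rintro U ⟨i, hi, -⟩
    exact hi rfl

lemma walk_support_inj {G : SimpleGraph V} {a b : V} :
    ∀ (p q : G.Walk a b), p.support = q.support → p = q := by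
  intro p
  induction p with
  | nil =>
    intro q h
    cases q with
    | nil => rfl
    | cons h' q' => exact absurd (congrArg List.length h) (by simp)
  | cons hadj p' ih =>
    intro q h
    cases q with
    | nil =>
      exact absurd (congrArg List.length h) (by simp)
    | cons hadj' q' =>
      rw [Walk.support_cons, Walk.support_cons] at h
      injection h with _ h2
      have h1 : p'.support.head? = q'.support.head? := by rw [h2]
      rw [p'.support_eq_cons, q'.support_eq_cons, List.head?_cons, List.head?_cons,
        Option.some_inj] at h1
      subst h1
      rw [ih q' h2]

/-- a vertex outside a maximal clique has at most one neighbor in it. -/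
theorem stmt_2 {V : Type*} (G : SimpleGraph V) (a b : V) (hab : a ≠ b)
    (K : Set (Geodesic G a b)) (hK : (SPG G a b).IsClique K)
    (hmax : ∀ K', (SPG G a b).IsClique K' → K ⊆ K' → K' = K)
    (U : Geodesic G a b) (hU : U ∉ K) :
    ∀ W₁ ∈ K, ∀ W₂ ∈ K, (SPG G a b).Adj U W₁ → (SPG G a b).Adj U W₂ → W₁ = W₂ := by
  intro W₁ hW₁ W₂ hW₂ hA₁ hA₂
  by_contra hne
  obtain ⟨i, hi, hiu⟩ := hA₁
  obtain ⟨j, hj, hju⟩ := hA₂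
  simp only [diffIndices, Set.mem_setOf_eq] at hi hj hiu hju
  -- W₁ and W₂ are adjacent since K is a clique
  obtain ⟨n, hn, hnu⟩ := hK hW₁ hW₂ hne
  simp only [diffIndices, Set.mem_setOf_eq] at hn hnu
  -- first, i = j
  have hij : i = j := by
    by_contra hij
    have h1 : U.1.support[i]? = W₂.1.support[i]? := by
      by_contra h; exact hij (hju i h)
    have h2 : U.1.support[j]? = W₁.1.support[j]? := by
      by_contra h; exact hij ((hiu j h).symm)
    have hni : n = i := (hnu i (by rw [← h1]; exact fun h => hi h.symm)).symm
    have hnj : n = j := (hnu j (by rw [← h2]; exact hj)).symm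
    exact hij (hni ▸ hnj)
  subst hij
  -- the unique diff index of W₁, W₂ is also i
  have hni : n = i := by
    by_contra hni
    have h1 : U.1.support[n]? = W₁.1.support[n]? := by
      by_contra h; exact hni (hiu n h)
    have h2 : U.1.support[n]? = W₂.1.support[n]? := by
      by_contra h; exact hni (hju n h)
    exact hn (h1 ▸ h2)
  subst hni
  -- every W ∈ K is adjacent to U
  have key : ∀ W ∈ K, (SPG G a b).Adj U W := by
    intro W hW
    rcases eq_or_ne W W₁ with rfl | hne1
    · exact ⟨n, hi, hiu⟩
    rcases eq_or_ne W W₂ with rfl | hne2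
    · exact ⟨n, hj, hju⟩
    obtain ⟨k, hk, hku⟩ := hK hW hW₁ hne1
    obtain ⟨m, hm, hmu⟩ := hK hW hW₂ hne2
    simp only [diffIndices, Set.mem_setOf_eq] at hk hku hm hmu
    -- k = n
    have hkn : k = n := by
      by_contra hkn
      have hWn : W.1.support[n]? = W₁.1.support[n]? := by
        by_contra h; exact hkn ((hku n h).symm)
      have hW12 : W₁.1.support[k]? = W₂.1.support[k]? := by
        by_contra h; exact hkn (hnu k h)
      have hmk : m = k := (hmu k (by rw [← hW12]; exact hk)).symm
      have hmn : m = n := (hmu n (by rw [hWn]; exact hn)).symm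
      exact hkn (hmk ▸ hmn)
    subst hkn
    -- W agrees with U away from n
    have hagree : ∀ l, l ≠ k → U.1.support[l]? = W.1.support[l]? := by
      intro l hl
      have h1 : U.1.support[l]? = W₁.1.support[l]? := by
        by_contra h; exact hl (hiu l h)
      have h2 : W.1.support[l]? = W₁.1.support[l]? := by
        by_contra h; exact hl (hku l h)
      rw [h1, h2]
    -- at i they must differ, else U = W ∈ K
    have hUn : U.1.support[k]? ≠ W.1.support[k]? := by
      intro h
      apply hU
      have hsup : U.1.support = W.1.support := by
        apply List.ext_getElem?
        intro l
        rcases eq_or_ne l k with rfl | hl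
        · exact h
        · exact hagree l hl
      have : U = W := Subtype.ext (walk_support_inj _ _ hsup)
      rw [this]; exact hW
    exact ⟨k, hUn, fun l hl => by
      by_contra hln
      exact hl (hagree l hln)⟩
  -- insert U K is a clique, contradicting maximality
  have hclique : (SPG G a b).IsClique (insert U K) := by
    intro x hx y hy hxy
    rcases hx with rfl | hx
    · rcases hy with rfl | hy
      · exact absurd rfl hxy
      · exact key y hy
    · rcases hy with rfl | hy
      · exact ((key x hx).symm)
      · exact hK hx hy hxy
  have := hmax (insert U K) hclique (Set.subset_insert U K)
  exact hU (this ▸ Set.mem_insert U K)
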